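/- Let (u,p) be a Gavrilov flow on an open set U ⊆ ℝⁿ and let γ : I → U be a differentiable curve on an interval I ⊆ ℝ satisfying γ'(t) = u(γ(t)) for all t ∈ I (a particle trajectory). Then the speed function t ↦ |u(γ(t))|² is constant on I (the Bernoulli law splits into two separate conservation laws: both the pressure and the speed are constant along each particle trajectory). -/

import Mathlib

/-- A pair `(u, p)` of smooth functions on an open set `U ⊆ ℝⁿ` is a *Gavrilov flow*
if it satisfies the steady Euler equations (momentum and incompressibility) together with
the orthogonality condition `u · grad p = 0` at every point of `U`. -/
def IsGavrilovFlow {n : ℕ} (U : Set (Fin n → ℝ)) (u : (Fin n → ℝ) → Fin n → ℝ)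
    (p : (Fin n → ℝ) → ℝ) : Prop :=
  IsOpen U ∧ ContDiffOn ℝ (⊤ : ℕ∞) u U ∧ ContDiffOn ℝ (⊤ : ℕ∞) p U ∧
  (∀ x ∈ U, ∀ i, (∑ j, u x j * fderiv ℝ u x (Pi.single j 1) i)
      + fderiv ℝ p x (Pi.single i 1) = 0) ∧
  (∀ x ∈ U, ∑ i, fderiv ℝ u x (Pi.single i 1) i = 0) ∧
  (∀ x ∈ U, ∑ i, u x i * fderiv ℝ p x (Pi.single i 1) = 0)

/-- for a Gavrilov flow the squared speed `|u(γ(t))|²` is constant along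
every particle trajectory `γ' = u ∘ γ` defined on an interval (so the Bernoulli law splits:
both the pressure and the speed are conserved separately). -/
theorem speed_const_on_trajectory {n : ℕ} (U : Set (Fin n → ℝ))
    (u : (Fin n → ℝ) → Fin n → ℝ) (p : (Fin n → ℝ) → ℝ)
    (hG : IsGavrilovFlow U u p)
    (I : Set ℝ) (hI : I.OrdConnected) (γ : ℝ → Fin n → ℝ)
    (hmem : ∀ t ∈ I, γ t ∈ U)
    (hγ : ∀ t ∈ I, HasDerivWithinAt γ (u (γ t)) I t) :
    ∀ s ∈ I, ∀ t ∈ I, ∑ i, (u (γ s) i) ^ 2 = ∑ i, (u (γ t) i) ^ 2 := by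
  obtain ⟨hU, hu, hp, hmom, hdiv, horth⟩ := hG
  have hconv : Convex ℝ I := convex_iff_ordConnected.mpr hI
  have key : ∀ t ∈ I, HasDerivWithinAt (fun s => ∑ i, (u (γ s) i) ^ 2) 0 I t := by
    intro t ht
    have hx : γ t ∈ U := hmem t ht
    have hud : DifferentiableAt ℝ u (γ t) :=
      (hu.contDiffAt (hU.mem_nhds hx)).differentiableAt (by simp)
    have huγ : HasDerivWithinAt (fun s => u (γ s)) (fderiv ℝ u (γ t) (u (γ t))) I t :=
      hud.hasFDerivAt.comp_hasDerivWithinAt t (hγ t ht)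
    have hcomp := hasDerivWithinAt_pi.mp huγ
    have hsum : HasDerivWithinAt (fun s => ∑ i, (u (γ s) i) ^ 2)
        (∑ i, (2 : ℕ) * (u (γ t) i) ^ 1 * (fderiv ℝ u (γ t) (u (γ t)) i)) I t :=
      HasDerivWithinAt.fun_sum fun i _ => (hcomp i).fun_pow 2
    have hL : ∀ i, fderiv ℝ u (γ t) (u (γ t)) i
        = ∑ j, u (γ t) j * fderiv ℝ u (γ t) (Pi.single j 1) i := by
      intro i
      have hv : u (γ t) = ∑ j, u (γ t) j • (Pi.single j 1 : Fin n → ℝ) := by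
        funext k
        simp [Finset.sum_apply, Pi.single_apply, Finset.sum_ite_eq', mul_comm]
      conv_lhs => rw [hv]
      rw [map_sum]
      simp [Finset.sum_apply, smul_eq_mul]
    have hzero : (∑ i, (2 : ℕ) * (u (γ t) i) ^ 1 * (fderiv ℝ u (γ t) (u (γ t)) i)) = 0 := by
      have := horth (γ t) hx
      calc (∑ i, (2 : ℕ) * (u (γ t) i) ^ 1 * (fderiv ℝ u (γ t) (u (γ t)) i))
          = ∑ i, 2 * (u (γ t) i * (∑ j, u (γ t) j * fderiv ℝ u (γ t) (Pi.single j 1) i)) := by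
            refine Finset.sum_congr rfl fun i _ => ?_
            rw [hL i]; push_cast; ring
        _ = ∑ i, 2 * (u (γ t) i * (- fderiv ℝ p (γ t) (Pi.single i 1))) := by
            refine Finset.sum_congr rfl fun i _ => ?_
            have h := hmom (γ t) hx i
            have : (∑ j, u (γ t) j * fderiv ℝ u (γ t) (Pi.single j 1) i)
                = - fderiv ℝ p (γ t) (Pi.single i 1) := by linarith
            rw [this]
        _ = -2 * ∑ i, u (γ t) i * fderiv ℝ p (γ t) (Pi.single i 1) := by
            rw [Finset.mul_sum]; exact Finset.sum_congr rfl fun i _ => by ring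
        _ = 0 := by rw [this]; ring
    rwa [hzero] at hsum
  intro s hs t ht
  have := Convex.norm_image_sub_le_of_norm_hasDerivWithin_le
    (f' := fun _ => (0 : ℝ)) (C := 0) key (fun x _ => by simp) hconv ht hs
  simpa [sub_eq_zero] using this
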